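/- The softmax function softmax : ℝ^K → ℝ^K, defined by softmax(z)_k = e^{z_k} / Σ_{j=1}^K e^{z_j}, is Lipschitz continuous with Lipschitz constant 1 with respect to the Euclidean norm: for all z, z' ∈ ℝ^K, ‖softmax(z) − softmax(z')‖₂ ≤ ‖z − z'‖₂. -/

import Mathlib

open scoped BigOperators

/-- Euclidean (ℓ2) norm of a vector in `ℝ^d`. -/
noncomputable def norm2 {d : ℕ} (x : Fin d → ℝ) : ℝ := Real.sqrt (∑ j, x j ^ 2)

/-- The softmax function `softmax(z)_k = e^{z_k} / Σ_j e^{z_j}`. -/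
noncomputable def softmax {K : ℕ} (z : Fin K → ℝ) : Fin K → ℝ :=
  fun k => Real.exp (z k) / ∑ j, Real.exp (z j)

/-- Softmax is 1-Lipschitz with respect to the Euclidean norm:
`‖softmax(z) − softmax(z')‖₂ ≤ ‖z − z'‖₂`. -/
theorem softmax_lipschitz_one {K : ℕ} (hK : 0 < K) (z z' : Fin K → ℝ) :
    norm2 (fun k => softmax z k - softmax z' k) ≤ norm2 (fun k => z k - z' k) := by
  haveI : Nonempty (Fin K) := ⟨⟨0, hK⟩⟩
  set b : Fin K → ℝ := fun k => z k - z' k with hbdef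
  set w : Fin K → ℝ := fun k => softmax z k - softmax z' k with hwdef
  -- the path and its data
  set N : ℝ → Fin K → ℝ := fun t k => Real.exp (z' k + t * b k) with hNdef
  set D : ℝ → ℝ := fun t => ∑ j, N t j with hDdef
  have hD_pos : ∀ t, 0 < D t := fun t =>
    Finset.sum_pos (fun j _ => Real.exp_pos _) Finset.univ_nonempty
  set p : ℝ → Fin K → ℝ := fun t k => N t k / D t with hpdef
  set m : ℝ → ℝ := fun t => ∑ j, p t j * b j with hmdef
  set g : ℝ → ℝ := fun t => ∑ k, w k * p t k with hgdef
  have hp_nonneg : ∀ t k, 0 ≤ p t k := fun t k =>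
    div_nonneg (Real.exp_pos _).le (hD_pos t).le
  have hp_sum : ∀ t, ∑ k, p t k = 1 := by
    intro t
    simp only [hpdef]
    rw [← Finset.sum_div, div_self (hD_pos t).ne']
  have hp_le_one : ∀ t k, p t k ≤ 1 := by
    intro t k
    calc p t k ≤ ∑ j, p t j :=
          Finset.single_le_sum (fun j _ => hp_nonneg t j) (Finset.mem_univ k)
      _ = 1 := hp_sum t
  -- derivatives
  have hN' : ∀ k t, HasDerivAt (fun t => N t k) (N t k * b k) t := by
    intro k t
    have h1 : HasDerivAt (fun t : ℝ => z' k + t * b k) (b k) t := by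
      simpa using ((hasDerivAt_id t).mul_const (b k)).const_add (z' k)
    simpa using h1.exp
  have hD' : ∀ t, HasDerivAt D (∑ j, N t j * b j) t := by
    intro t
    exact HasDerivAt.fun_sum fun j _ => hN' j t
  have hg' : ∀ t, HasDerivAt g (∑ k, w k * (p t k * (b k - m t))) t := by
    intro t
    have hk : ∀ k, HasDerivAt (fun t => w k * p t k)
        (w k * (p t k * (b k - m t))) t := by
      intro k
      have hq : HasDerivAt (fun t => p t k)
          ((N t k * b k * D t - N t k * (∑ j, N t j * b j)) / (D t) ^ 2) t :=
        (hN' k t).div (hD' t) (hD_pos t).ne'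
      have heq : (N t k * b k * D t - N t k * (∑ j, N t j * b j)) / (D t) ^ 2
          = p t k * (b k - m t) := by
        have hm : m t = (∑ j, N t j * b j) / D t := by
          simp only [hmdef, hpdef, Finset.sum_div]
          congr 1; ext j; ring
        rw [hm]
        simp only [hpdef]
        have hDne := (hD_pos t).ne'
        field_simp
      rw [heq] at hq
      exact hq.const_mul (w k)
    exact HasDerivAt.fun_sum fun k _ => hk k
  -- bound the derivative
  have hbound : ∀ t, |∑ k, w k * (p t k * (b k - m t))| ≤ norm2 w * norm2 b := by
    intro t
    set q : Fin K → ℝ := fun k => p t k * (b k - m t) with hqdef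
    have hq_sq : ∑ k, q k ^ 2 ≤ ∑ k, b k ^ 2 := by
      have h1 : ∀ k, q k ^ 2 ≤ p t k * (b k - m t) ^ 2 := by
        intro k
        have : q k ^ 2 = p t k ^ 2 * (b k - m t) ^ 2 := by rw [hqdef]; ring
        rw [this]
        have : p t k ^ 2 ≤ p t k := by
          nlinarith [hp_nonneg t k, hp_le_one t k]
        exact mul_le_mul_of_nonneg_right this (sq_nonneg _)
      calc ∑ k, q k ^ 2 ≤ ∑ k, p t k * (b k - m t) ^ 2 :=
            Finset.sum_le_sum fun k _ => h1 k
        _ = (∑ k, p t k * b k ^ 2) - (m t) ^ 2 := by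
            have : ∀ k, p t k * (b k - m t) ^ 2
                = p t k * b k ^ 2 - 2 * m t * (p t k * b k) + (m t) ^ 2 * p t k := by
              intro k; ring
            simp_rw [this]
            rw [Finset.sum_add_distrib, Finset.sum_sub_distrib, ← Finset.mul_sum,
              ← Finset.mul_sum, hp_sum t]
            have hmt : ∑ i, p t i * b i = m t := rfl
            rw [hmt]
            ring
        _ ≤ ∑ k, p t k * b k ^ 2 := by nlinarith [sq_nonneg (m t)]
        _ ≤ ∑ k, b k ^ 2 := by
            refine Finset.sum_le_sum fun k _ => ?_
            nlinarith [hp_le_one t k, sq_nonneg (b k), hp_nonneg t k]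
    have hcs : ∑ k, w k * q k ≤ Real.sqrt (∑ k, w k ^ 2) * Real.sqrt (∑ k, q k ^ 2) :=
      Real.sum_mul_le_sqrt_mul_sqrt _ _ _
    have hcs' : ∑ k, (-w k) * q k ≤ Real.sqrt (∑ k, (-w k) ^ 2) * Real.sqrt (∑ k, q k ^ 2) :=
      Real.sum_mul_le_sqrt_mul_sqrt _ _ _
    have hq_sqrt : Real.sqrt (∑ k, q k ^ 2) ≤ norm2 b :=
      Real.sqrt_le_sqrt hq_sq
    have hw_sqrt : Real.sqrt (∑ k, w k ^ 2) = norm2 w := rfl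
    have hnw : 0 ≤ Real.sqrt (∑ k, w k ^ 2) := Real.sqrt_nonneg _
    rw [abs_le]
    constructor
    · have : ∑ k, (-w k) * q k ≤ norm2 w * norm2 b := by
        calc ∑ k, (-w k) * q k ≤ Real.sqrt (∑ k, (-w k) ^ 2) * Real.sqrt (∑ k, q k ^ 2) := hcs'
          _ = Real.sqrt (∑ k, w k ^ 2) * Real.sqrt (∑ k, q k ^ 2) := by simp
          _ ≤ norm2 w * norm2 b := by
              rw [hw_sqrt] at *
              exact mul_le_mul_of_nonneg_left hq_sqrt (Real.sqrt_nonneg _)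
      have h2 : ∑ k, (-w k) * q k = -∑ k, w k * q k := by
        rw [← Finset.sum_neg_distrib]; congr 1; ext k; ring
      linarith [this, h2.symm.le]
    · calc ∑ k, w k * q k ≤ Real.sqrt (∑ k, w k ^ 2) * Real.sqrt (∑ k, q k ^ 2) := hcs
        _ ≤ norm2 w * norm2 b := by
            rw [hw_sqrt]
            exact mul_le_mul_of_nonneg_left hq_sqrt (Real.sqrt_nonneg _)
  -- mean value inequality
  have hmv : ‖g 1 - g 0‖ ≤ norm2 w * norm2 b := by
    apply norm_image_sub_le_of_norm_deriv_le_segment_01'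
      (f' := fun t => ∑ k, w k * (p t k * (b k - m t)))
    · exact fun x _ => (hg' x).hasDerivWithinAt
    · intro x _
      simpa using hbound x
  -- identify g 1 - g 0 with ‖w‖²
  have hg1 : g 1 = ∑ k, w k * softmax z k := by
    simp only [hgdef, hpdef, hNdef, hDdef, hbdef, softmax]
    congr 1; ext k; norm_num
  have hg0 : g 0 = ∑ k, w k * softmax z' k := by
    simp only [hgdef, hpdef, hNdef, hDdef, softmax]
    congr 1; ext k; norm_num
  have hdiff : g 1 - g 0 = ∑ k, w k ^ 2 := by
    rw [hg1, hg0, ← Finset.sum_sub_distrib]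
    congr 1; ext k
    rw [hwdef]; ring
  have hsq : (norm2 w) ^ 2 ≤ norm2 w * norm2 b := by
    have h1 : (norm2 w) ^ 2 = ∑ k, w k ^ 2 := by
      rw [norm2, Real.sq_sqrt (Finset.sum_nonneg fun k _ => sq_nonneg _)]
    rw [h1, ← hdiff]
    calc g 1 - g 0 ≤ |g 1 - g 0| := le_abs_self _
      _ ≤ norm2 w * norm2 b := hmv
  have hnw0 : (0:ℝ) ≤ norm2 w := Real.sqrt_nonneg _
  rcases eq_or_lt_of_le hnw0 with h0 | h0
  · rw [← h0]
    exact Real.sqrt_nonneg _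
  · have := le_of_mul_le_mul_left (by nlinarith : norm2 w * norm2 w ≤ norm2 w * norm2 b) h0
    exact this
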